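/- Let ω > 0, γ₁ > 0 with sin-type nondegeneracy: the quantity e^{-ξω}e^{iγ₁ω} − e^{ξω}e^{-iγ₁ω} is nonzero for all ξ ∈ ℝ (equivalently sin(γ₁ω) ≠ 0). Then there exists a constant C depending only on ω and γ₁ such that for all ξ ∈ ℝ and all z ∈ [-ω, 0], |e^{-ξ(ω+z)}e^{iγ₁(ω+z)} + e^{ξ(ω+z)}e^{-iγ₁(ω+z)}|² / |e^{-ξω}e^{iγ₁ω} − e^{ξω}e^{-iγ₁ω}|² ≤ C. -/

import Mathlib

open Complex Set

lemma aux_norm1 (a b c : ℝ) :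
    ‖(Real.exp a : ℂ) * Complex.exp (Complex.I * (b:ℂ) * (c:ℂ))‖ = Real.exp a := by
  rw [norm_mul]
  simp [Complex.norm_exp, Real.exp_pos a |>.le]

lemma aux_norm2 (a b c : ℝ) :
    ‖(Real.exp a : ℂ) * Complex.exp (-(Complex.I * (b:ℂ) * (c:ℂ)))‖ = Real.exp a := by
  rw [norm_mul]
  simp [Complex.norm_exp, Real.exp_pos a |>.le]

set_option maxHeartbeats 1000000 in
theorem stmt7 (ω γ₁ : ℝ) (hω : 0 < ω) (hγ : 0 < γ₁)
    (hnd : ∀ ξ : ℝ,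
      (Real.exp (-ξ * ω) : ℂ) * Complex.exp (Complex.I * (γ₁ : ℂ) * (ω : ℂ))
        - (Real.exp (ξ * ω) : ℂ) * Complex.exp (-(Complex.I * (γ₁ : ℂ) * (ω : ℂ))) ≠ 0) :
    ∃ C : ℝ, ∀ ξ : ℝ, ∀ z ∈ Icc (-ω) 0,
      ‖(Real.exp (-ξ * (ω + z)) : ℂ) * Complex.exp (Complex.I * (γ₁ : ℂ) * ((ω : ℂ) + (z : ℂ)))
          + (Real.exp (ξ * (ω + z)) : ℂ) *
              Complex.exp (-(Complex.I * (γ₁ : ℂ) * ((ω : ℂ) + (z : ℂ))))‖ ^ 2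
        / ‖(Real.exp (-ξ * ω) : ℂ) * Complex.exp (Complex.I * (γ₁ : ℂ) * (ω : ℂ))
          - (Real.exp (ξ * ω) : ℂ) * Complex.exp (-(Complex.I * (γ₁ : ℂ) * (ω : ℂ)))‖ ^ 2 ≤ C := by
  set D : ℝ → ℂ := fun ξ =>
    (Real.exp (-ξ * ω) : ℂ) * Complex.exp (Complex.I * (γ₁ : ℂ) * (ω : ℂ))
      - (Real.exp (ξ * ω) : ℂ) * Complex.exp (-(Complex.I * (γ₁ : ℂ) * (ω : ℂ))) with hDdef
  -- continuity of ξ ↦ ‖D ξ‖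
  have hcont : Continuous fun ξ => ‖D ξ‖ := by
    apply Continuous.norm
    apply Continuous.sub
    · exact (Complex.continuous_ofReal.comp (Real.continuous_exp.comp (by continuity))).mul
        continuous_const
    · exact (Complex.continuous_ofReal.comp (Real.continuous_exp.comp (by continuity))).mul
        continuous_const
  set T : ℝ := 1 + Real.log 2 / ω with hT
  have hT0 : 0 < T := by positivity
  -- minimum of ‖D‖ on [-T,T]
  obtain ⟨ξ₀, hξ₀mem, hξ₀min⟩ :=
    (isCompact_Icc (a := -T) (b := T)).exists_isMinOn (by
      exact ⟨-T, by constructor <;> linarith⟩) hcont.continuousOn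
  set m : ℝ := ‖D ξ₀‖ with hm
  have hm0 : 0 < m := norm_pos_iff.mpr (hnd ξ₀)
  refine ⟨max 16 ((2 * Real.exp (T * ω)) ^ 2 / m ^ 2), fun ξ z hz => ?_⟩
  obtain ⟨hz1, hz2⟩ := hz
  -- numerator bound
  have hωz1 : 0 ≤ ω + z := by linarith
  have hωz2 : ω + z ≤ ω := by linarith
  have hnum : ‖(Real.exp (-ξ * (ω + z)) : ℂ) *
        Complex.exp (Complex.I * (γ₁ : ℂ) * ((ω : ℂ) + (z : ℂ)))
      + (Real.exp (ξ * (ω + z)) : ℂ) *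
        Complex.exp (-(Complex.I * (γ₁ : ℂ) * ((ω : ℂ) + (z : ℂ))))‖ ≤ 2 * Real.exp (|ξ| * ω) := by
    calc _ ≤ ‖(Real.exp (-ξ * (ω + z)) : ℂ) *
            Complex.exp (Complex.I * (γ₁ : ℂ) * ((ω : ℂ) + (z : ℂ)))‖
          + ‖(Real.exp (ξ * (ω + z)) : ℂ) *
            Complex.exp (-(Complex.I * (γ₁ : ℂ) * ((ω : ℂ) + (z : ℂ))))‖ := norm_add_le _ _
      _ = Real.exp (-ξ * (ω + z)) + Real.exp (ξ * (ω + z)) := by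
          rw [show ((ω : ℂ) + (z : ℂ)) = ((ω + z : ℝ) : ℂ) by push_cast; ring,
            aux_norm1, aux_norm2]
      _ ≤ Real.exp (|ξ| * ω) + Real.exp (|ξ| * ω) := by
          gcongr
          · nlinarith [neg_abs_le ξ, abs_nonneg ξ]
          · nlinarith [le_abs_self ξ, abs_nonneg ξ]
      _ = 2 * Real.exp (|ξ| * ω) := by ring
  have hden0 : 0 < ‖D ξ‖ := norm_pos_iff.mpr (hnd ξ)
  have hnum0 : (0:ℝ) ≤ ‖(Real.exp (-ξ * (ω + z)) : ℂ) *
        Complex.exp (Complex.I * (γ₁ : ℂ) * ((ω : ℂ) + (z : ℂ)))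
      + (Real.exp (ξ * (ω + z)) : ℂ) *
        Complex.exp (-(Complex.I * (γ₁ : ℂ) * ((ω : ℂ) + (z : ℂ))))‖ := norm_nonneg _
  rcases le_or_gt (|ξ|) T with hcase | hcase
  · -- compact case
    refine le_trans ?_ (le_max_right _ _)
    have hden_ge : m ≤ ‖D ξ‖ := hξ₀min ⟨by linarith [neg_abs_le ξ], by linarith [le_abs_self ξ]⟩
    have hnum' : ‖(Real.exp (-ξ * (ω + z)) : ℂ) *
          Complex.exp (Complex.I * (γ₁ : ℂ) * ((ω : ℂ) + (z : ℂ)))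
        + (Real.exp (ξ * (ω + z)) : ℂ) *
          Complex.exp (-(Complex.I * (γ₁ : ℂ) * ((ω : ℂ) + (z : ℂ))))‖ ≤ 2 * Real.exp (T * ω) := by
      refine hnum.trans ?_
      have : Real.exp (|ξ| * ω) ≤ Real.exp (T * ω) := by
        apply Real.exp_le_exp.mpr; nlinarith
      linarith
    exact div_le_div₀ (by positivity) (by nlinarith) (by positivity) (by nlinarith)
  · -- large |ξ| case
    refine le_trans ?_ (le_max_left _ _)
    set E : ℝ := Real.exp (|ξ| * ω) with hE
    have hE1 : 1 ≤ E := Real.one_le_exp (by positivity)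
    have hE0 : 0 < E := by linarith
    -- lower bound on denominator
    have hden_ge : (3/4) * E ≤ ‖D ξ‖ := by
      have h1 : |Real.exp (-ξ * ω) - Real.exp (ξ * ω)| ≤ ‖D ξ‖ := by
        have := abs_norm_sub_norm_le ((Real.exp (-ξ * ω) : ℂ) *
          Complex.exp (Complex.I * (γ₁ : ℂ) * (ω : ℂ)))
          ((Real.exp (ξ * ω) : ℂ) * Complex.exp (-(Complex.I * (γ₁ : ℂ) * (ω : ℂ))))
        rwa [aux_norm1, aux_norm2] at this
      have habs : |Real.exp (-ξ * ω) - Real.exp (ξ * ω)|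
          = Real.exp (|ξ| * ω) - Real.exp (-(|ξ| * ω)) := by
        rcases le_or_gt 0 ξ with h | h
        · rw [_root_.abs_of_nonneg h]
          rw [abs_of_nonpos (sub_nonpos.mpr (Real.exp_le_exp.mpr (by nlinarith)))]
          rw [neg_sub, neg_mul]
        · rw [_root_.abs_of_neg h]
          rw [_root_.abs_of_nonneg (sub_nonneg.mpr (Real.exp_le_exp.mpr (by nlinarith)))]
          rw [neg_mul, neg_neg]
      have h2 : E - Real.exp (-(|ξ| * ω)) ≤ |Real.exp (-ξ * ω) - Real.exp (ξ * ω)| := habs.ge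
      have hlogle : Real.log 2 ≤ |ξ| * ω := by
        have hTω : T * ω = ω + Real.log 2 := by rw [hT]; field_simp
        nlinarith
      have hE2 : (2:ℝ) ≤ E := by
        rw [hE]
        calc (2:ℝ) = Real.exp (Real.log 2) := (Real.exp_log (by norm_num)).symm
          _ ≤ _ := Real.exp_le_exp.mpr hlogle
      have h5 : Real.exp (-(|ξ| * ω)) ≤ (1/4) * E := by
        have hx := Real.exp_pos (|ξ| * ω)
        have hinv : Real.exp (|ξ| * ω) * (Real.exp (|ξ| * ω))⁻¹ = 1 :=
          mul_inv_cancel₀ hx.ne'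
        rw [Real.exp_neg]
        nlinarith
      linarith
    have hE34 : (0:ℝ) < 3/4 * E := by linarith
    calc _ ≤ (2 * E) ^ 2 / ((3/4) * E) ^ 2 := by
          apply div_le_div₀ (by positivity)
            (pow_le_pow_left₀ hnum0 hnum 2) (by positivity)
            (pow_le_pow_left₀ hE34.le hden_ge 2)
      _ = 64/9 := by field_simp; ring
      _ ≤ 16 := by norm_num
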